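/- Along the trajectory of the factorized-momentum ODE dW/dt = -(β û 1_nᵀ + G) - (β 1_m v̂ᵀ + G), du/dt = G1_n/n - αu, dv/dt = Gᵀ1_m/m - αv, with û = u - G1_n/n, v̂ = v - Gᵀ1_m/m and G = ∇f(W), the Hamiltonian H(W,u,v) = f(W) + (βn/2)‖u‖₂² + (βm/2)‖v‖₂² satisfies dH/dt ≤ -2‖G‖²_F + (1/n)‖G1_n‖₂² + (1/m)‖Gᵀ1_m‖₂² ≤ 0, assuming β ∈ (0,1) and α > 0. -/

import Mathlib

open scoped BigOperators
open Finset

/-- Along the factorized-momentum ODE, the Hamiltonian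
`H(W,u,v) = f(W) + (βn/2)‖u‖² + (βm/2)‖v‖²` satisfies
`dH/dt ≤ -2‖G‖²_F + (1/n)‖G1_n‖² + (1/m)‖Gᵀ1_m‖² ≤ 0`. -/
theorem stmt_3 (m n : ℕ) (hm : 0 < m) (hn : 0 < n)
    (f : EuclideanSpace ℝ (Fin m × Fin n) → ℝ)
    (g : EuclideanSpace ℝ (Fin m × Fin n) → EuclideanSpace ℝ (Fin m × Fin n))
    (hf : ∀ x, HasGradientAt f (g x) x)
    (α β : ℝ) (hα : 0 < α) (hβ : β ∈ Set.Ioo (0 : ℝ) 1)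
    (W : ℝ → EuclideanSpace ℝ (Fin m × Fin n))
    (u : ℝ → EuclideanSpace ℝ (Fin m))
    (v : ℝ → EuclideanSpace ℝ (Fin n))
    (hW : ∀ t, HasDerivAt W
      (WithLp.toLp 2 fun p : Fin m × Fin n =>
        -(β * (u t p.1 - (∑ j, g (W t) (p.1, j)) / n) + g (W t) p)
        - (β * (v t p.2 - (∑ i, g (W t) (i, p.2)) / m) + g (W t) p)) t)
    (hu : ∀ t, HasDerivAt u
      (WithLp.toLp 2 fun i : Fin m => (∑ j, g (W t) (i, j)) / n - α * u t i) t)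
    (hv : ∀ t, HasDerivAt v
      (WithLp.toLp 2 fun j : Fin n => (∑ i, g (W t) (i, j)) / m - α * v t j) t)
    (t : ℝ) :
    ∃ d : ℝ,
      HasDerivAt (fun τ => f (W τ) + (β * n / 2) * ‖u τ‖ ^ 2
        + (β * m / 2) * ‖v τ‖ ^ 2) d t ∧
      d ≤ -2 * (∑ p : Fin m × Fin n, (g (W t) p) ^ 2)
          + (1 / n) * ∑ i, (∑ j, g (W t) (i, j)) ^ 2
          + (1 / m) * ∑ j, (∑ i, g (W t) (i, j)) ^ 2 ∧
      -2 * (∑ p : Fin m × Fin n, (g (W t) p) ^ 2)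
          + (1 / n) * ∑ i, (∑ j, g (W t) (i, j)) ^ 2
          + (1 / m) * ∑ j, (∑ i, g (W t) (i, j)) ^ 2 ≤ 0 := by
  obtain ⟨hβ0, hβ1⟩ := hβ
  have hn' : (0:ℝ) < n := by exact_mod_cast hn
  have hm' : (0:ℝ) < m := by exact_mod_cast hm
  have hW' := hW t
  have hu' := hu t
  have hv' := hv t
  have hf' := (hf (W t)).hasFDerivAt
  set G : EuclideanSpace ℝ (Fin m × Fin n) := g (W t) with hG
  set dW : EuclideanSpace ℝ (Fin m × Fin n) :=
    (WithLp.toLp 2 fun p : Fin m × Fin n =>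
        -(β * (u t p.1 - (∑ j, G (p.1, j)) / n) + G p)
        - (β * (v t p.2 - (∑ i, G (i, p.2)) / m) + G p)) with hdW
  set du : EuclideanSpace ℝ (Fin m) :=
    (WithLp.toLp 2 fun i : Fin m => (∑ j, G (i, j)) / n - α * u t i) with hdu
  set dv : EuclideanSpace ℝ (Fin n) :=
    (WithLp.toLp 2 fun j : Fin n => (∑ i, G (i, j)) / m - α * v t j) with hdv
  -- derivative of f ∘ W
  have h1 : HasDerivAt (fun τ => f (W τ)) (inner ℝ G dW : ℝ) t := by
    have := HasFDerivAt.comp_hasDerivAt (x := t) hf' hW'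
    simp only [InnerProductSpace.toDual_apply_apply] at this
    exact this
  have h2 : HasDerivAt (fun τ => ‖u τ‖ ^ 2)
      ((inner ℝ (u t) du : ℝ) + inner ℝ du (u t)) t := by
    simpa only [real_inner_self_eq_norm_sq] using hu'.inner (𝕜 := ℝ) hu'
  have h3 : HasDerivAt (fun τ => ‖v τ‖ ^ 2)
      ((inner ℝ (v t) dv : ℝ) + inner ℝ dv (v t)) t := by
    simpa only [real_inner_self_eq_norm_sq] using hv'.inner (𝕜 := ℝ) hv'
  have hH := (h1.add (h2.const_mul (β * n / 2))).add (h3.const_mul (β * m / 2))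
  refine ⟨_, hH, ?_, ?_⟩
  · -- the derivative value is ≤ the bound
    set S : ℝ := ∑ p : Fin m × Fin n, (G p) ^ 2 with hS
    set R : ℝ := ∑ i, (∑ j, G (i, j)) ^ 2 with hR
    set C : ℝ := ∑ j, (∑ i, G (i, j)) ^ 2 with hC
    set U : ℝ := ∑ i, (u t i) ^ 2 with hU
    set V : ℝ := ∑ j, (v t j) ^ 2 with hV
    have hA : ∑ p : Fin m × Fin n, u t p.1 * G p = ∑ i, u t i * ∑ j, G (i, j) := by
      rw [Fintype.sum_prod_type]
      refine Finset.sum_congr rfl fun i _ => ?_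
      show ∑ j, u t i * G (i, j) = u t i * ∑ j, G (i, j)
      rw [← Finset.mul_sum]
    have hB : ∑ p : Fin m × Fin n, (∑ j, G (p.1, j)) * G p = R := by
      rw [Fintype.sum_prod_type, hR]
      refine Finset.sum_congr rfl fun i _ => ?_
      show ∑ j, (∑ j', G (i, j')) * G (i, j) = (∑ j, G (i, j)) ^ 2
      rw [← Finset.mul_sum]; ring
    have hCc : ∑ p : Fin m × Fin n, v t p.2 * G p = ∑ j, v t j * ∑ i, G (i, j) := by
      rw [Fintype.sum_prod_type_right]
      refine Finset.sum_congr rfl fun j _ => ?_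
      show ∑ i, v t j * G (i, j) = v t j * ∑ i, G (i, j)
      rw [← Finset.mul_sum]
    have hD : ∑ p : Fin m × Fin n, (∑ i, G (i, p.2)) * G p = C := by
      rw [Fintype.sum_prod_type_right, hC]
      refine Finset.sum_congr rfl fun j _ => ?_
      show ∑ i, (∑ i', G (i', j)) * G (i, j) = (∑ i, G (i, j)) ^ 2
      rw [← Finset.mul_sum]; ring
    have e1 : (inner ℝ G dW : ℝ)
        = (-β) * (∑ i, u t i * ∑ j, G (i, j)) + (β / n) * R
          + (-β) * (∑ j, v t j * ∑ i, G (i, j)) + (β / m) * C + (-2) * S := by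
      have step : (inner ℝ G dW : ℝ)
          = ∑ p : Fin m × Fin n,
              ((-β) * (u t p.1 * G p) + (β / n) * ((∑ j, G (p.1, j)) * G p)
               + (-β) * (v t p.2 * G p) + (β / m) * ((∑ i, G (i, p.2)) * G p)
               + (-2) * (G p) ^ 2) := by
        simp only [PiLp.inner_apply, RCLike.inner_apply, conj_trivial, hdW, PiLp.toLp_apply]
        exact Finset.sum_congr rfl fun p _ => by ring
      rw [step]
      simp only [Finset.sum_add_distrib, ← Finset.mul_sum]
      rw [hA, hB, hCc, hD]
    have e2 : (inner ℝ (u t) du : ℝ) + inner ℝ du (u t)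
        = (2 / n) * (∑ i, u t i * ∑ j, G (i, j)) - 2 * α * U := by
      have step : (inner ℝ (u t) du : ℝ) + inner ℝ du (u t)
          = ∑ i, ((2 / n) * (u t i * ∑ j, G (i, j)) - 2 * α * (u t i) ^ 2) := by
        simp only [PiLp.inner_apply, RCLike.inner_apply, conj_trivial, hdu, PiLp.toLp_apply,
          ← Finset.sum_add_distrib]
        exact Finset.sum_congr rfl fun i _ => by ring
      rw [step, Finset.sum_sub_distrib, ← Finset.mul_sum, ← Finset.mul_sum, hU]
    have e3 : (inner ℝ (v t) dv : ℝ) + inner ℝ dv (v t)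
        = (2 / m) * (∑ j, v t j * ∑ i, G (i, j)) - 2 * α * V := by
      have step : (inner ℝ (v t) dv : ℝ) + inner ℝ dv (v t)
          = ∑ j, ((2 / m) * (v t j * ∑ i, G (i, j)) - 2 * α * (v t j) ^ 2) := by
        simp only [PiLp.inner_apply, RCLike.inner_apply, conj_trivial, hdv, PiLp.toLp_apply,
          ← Finset.sum_add_distrib]
        exact Finset.sum_congr rfl fun j _ => by ring
      rw [step, Finset.sum_sub_distrib, ← Finset.mul_sum, ← Finset.mul_sum, hV]
    have key : (inner ℝ G dW : ℝ)
        + (β * n / 2) * ((inner ℝ (u t) du : ℝ) + inner ℝ du (u t))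
        + (β * m / 2) * ((inner ℝ (v t) dv : ℝ) + inner ℝ dv (v t))
        = -2 * S + (β / n) * R + (β / m) * C - α * β * n * U - α * β * m * V := by
      rw [e1, e2, e3]
      field_simp
      ring
    rw [key]
    have hRnn : 0 ≤ R := Finset.sum_nonneg fun i _ => sq_nonneg _
    have hCnn : 0 ≤ C := Finset.sum_nonneg fun j _ => sq_nonneg _
    have hUnn : 0 ≤ U := Finset.sum_nonneg fun i _ => sq_nonneg _
    have hVnn : 0 ≤ V := Finset.sum_nonneg fun j _ => sq_nonneg _
    have i1 : (β / n) * R ≤ (1 / n) * R := by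
      apply mul_le_mul_of_nonneg_right _ hRnn
      gcongr
    have i2 : (β / m) * C ≤ (1 / m) * C := by
      apply mul_le_mul_of_nonneg_right _ hCnn
      gcongr
    have i3 : 0 ≤ α * β * n * U :=
      mul_nonneg (mul_nonneg (mul_nonneg hα.le hβ0.le) (Nat.cast_nonneg n)) hUnn
    have i4 : 0 ≤ α * β * m * V :=
      mul_nonneg (mul_nonneg (mul_nonneg hα.le hβ0.le) (Nat.cast_nonneg m)) hVnn
    linarith
  · -- the bound is nonpositive (Cauchy–Schwarz)
    set S : ℝ := ∑ p : Fin m × Fin n, (G p) ^ 2 with hS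
    have hSi : S = ∑ i, ∑ j, (G (i, j)) ^ 2 := Fintype.sum_prod_type _
    have hSj : S = ∑ j, ∑ i, (G (i, j)) ^ 2 := Fintype.sum_prod_type_right _
    have j1 : (∑ i, (∑ j, G (i, j)) ^ 2) ≤ n * S := by
      rw [hSi, Finset.mul_sum]
      refine Finset.sum_le_sum fun i _ => ?_
      simpa using sq_sum_le_card_mul_sum_sq (s := Finset.univ) (f := fun j => G (i, j))
    have j2 : (∑ j, (∑ i, G (i, j)) ^ 2) ≤ m * S := by
      rw [hSj, Finset.mul_sum]
      refine Finset.sum_le_sum fun j _ => ?_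
      simpa using sq_sum_le_card_mul_sum_sq (s := Finset.univ) (f := fun i => G (i, j))
    have k1 : (1 / (n:ℝ)) * (∑ i, (∑ j, G (i, j)) ^ 2) ≤ S := by
      rw [div_mul_eq_mul_div, one_mul, div_le_iff₀ hn', mul_comm]
      exact j1
    have k2 : (1 / (m:ℝ)) * (∑ j, (∑ i, G (i, j)) ^ 2) ≤ S := by
      rw [div_mul_eq_mul_div, one_mul, div_le_iff₀ hm', mul_comm]
      exact j2
    linarith
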